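/- Let k be a field, G a group, and let ρ : G → GL(V) and σ : G → GL(W) be linear representations of G on k-vector spaces V and W. Define a multiplication on E := (V ⊗ W) × G by (x, a)·(y, b) := ((ρ(b⁻¹a⁻¹ba) ⊗ id_W)(x) + (ρ(b⁻¹a⁻²b) ⊗ σ(a))(y), ab). Then for every a ∈ G the element (0, a) is a Moufang element of E: for all X, Y ∈ E, (0,a)·(X·((0,a)·Y)) = (((0,a)·X)·(0,a))·Y and ((X·(0,a))·Y)·(0,a) = X·((0,a)·(Y·(0,a))). -/

import Mathlib

namespace LoopStmt

/-- A Moufang element of a magma `(E, mul)`. -/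
def IsMoufangElt {E : Type*} (mul : E → E → E) (a : E) : Prop :=
  (∀ x y, mul a (mul x (mul a y)) = mul (mul (mul a x) a) y) ∧
  (∀ x y, mul (mul (mul x a) y) a = mul x (mul a (mul y a)))

end LoopStmt

private lemma map_map_apply {k V W : Type*} [Field k] [AddCommGroup V] [Module k V]
    [AddCommGroup W] [Module k W] (f f' : V →ₗ[k] V) (g g' : W →ₗ[k] W)
    (z : TensorProduct k V W) :
    TensorProduct.map f g (TensorProduct.map f' g' z)
      = TensorProduct.map (f ∘ₗ f') (g ∘ₗ g') z :=
  DFunLike.congr_fun (TensorProduct.map_comp f g f' g').symm z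

open LoopStmt in
/-- for a group `G` with linear representations `ρ, σ` on `V, W`,
every element `(0, a)` of `E = (V ⊗ W) × G` with the indicated multiplication is
a Moufang element. -/
theorem group_embeds_as_moufang_elements
    (k : Type*) [Field k] {G : Type*} [Group G]
    {V W : Type*} [AddCommGroup V] [Module k V] [AddCommGroup W] [Module k W]
    (ρ : Representation k G V) (σ : Representation k G W)
    (emul : (TensorProduct k V W) × G → (TensorProduct k V W) × G →
      (TensorProduct k V W) × G)
    (hemul : emul = fun p q =>
      (TensorProduct.map (ρ (q.2⁻¹ * p.2⁻¹ * q.2 * p.2)) LinearMap.id p.1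
        + TensorProduct.map (ρ (q.2⁻¹ * p.2⁻¹ * p.2⁻¹ * q.2)) (σ p.2) q.1,
       p.2 * q.2)) :
    ∀ a : G, IsMoufangElt emul ((0 : TensorProduct k V W), a) := by
  subst hemul
  intro a
  constructor <;> rintro ⟨x, b⟩ ⟨y, c⟩ <;>
    simp only [Prod.mk.injEq, map_zero, map_add, add_zero, zero_add,
      map_map_apply, LinearMap.comp_id, LinearMap.id_comp, ← Module.End.mul_eq_comp, ← Module.End.one_eq_id, one_mul, mul_one,
      ← map_mul] <;>
    constructor <;> try group
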